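/- Localization estimate (Proposition 2): for every u ∈ ℓ²(V,μ) with Δ_θ u ∈ ℓ²(V,μ) and every 0 < ε < 1, ‖χ_n Δ_θ u‖² ≤ (1−ε)^{-1}‖Δ_θ(χ_n u)‖² + ((9+4ε)/((1−ε)ε)) β_n² ‖u‖². -/

import Mathlib

open scoped BigOperators

/-- The formal magnetic Laplacian on a weighted graph. -/
noncomputable def magLap {V : Type*} (μ : V → ℝ) (b : V → V → ℝ) (θ : V → V → ℝ)
    (u : V → ℂ) (x : V) : ℂ :=
  (μ x : ℂ)⁻¹ * ∑' y, (b x y : ℂ) * (u x - Complex.exp (Complex.I * (θ x y : ℝ)) * u y)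

/-- The term `P_ψ[u]`. -/
noncomputable def magP {V : Type*} (μ : V → ℝ) (b : V → V → ℝ) (θ : V → V → ℝ)
    (ψ u : V → ℂ) (x : V) : ℂ :=
  (μ x : ℂ)⁻¹ *
    ∑' y, (b x y : ℂ) * (ψ x - ψ y) * (u x - Complex.exp (Complex.I * (θ x y : ℝ)) * u y)

/-- The cut-off function `χ_n`. -/
noncomputable def cutoff {V : Type*} (dist : V → ℕ) (n : ℕ) (x : V) : ℝ :=
  min (max ((2 * (n : ℝ) - (dist x : ℝ)) / (n : ℝ)) 0) 1

/-- Squared norm in `ℓ²(V, μ)`. -/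
noncomputable def wnormSq {V : Type*} (μ : V → ℝ) (f : V → ℂ) : ℝ :=
  ∑' x, μ x * ‖f x‖ ^ 2

/-- Inner product in `ℓ²(V, μ)`. -/
noncomputable def wInner {V : Type*} (μ : V → ℝ) (f g : V → ℂ) : ℂ :=
  ∑' x, (μ x : ℂ) * f x * (starRingEnd ℂ) (g x)

/-! ### Auxiliary material -/

open scoped ENNReal

section cutoffFacts
variable {V : Type*}

lemma cutoff_nonneg (d : V → ℕ) (n : ℕ) (x : V) : 0 ≤ cutoff d n x :=
  le_min (le_max_right _ _) zero_le_one

lemma cutoff_le_one (d : V → ℕ) (n : ℕ) (x : V) : cutoff d n x ≤ 1 :=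
  min_le_right _ _

lemma cutoff_eq_zero (d : V → ℕ) {n : ℕ} (hn : 1 ≤ n) {x : V}
    (h : 2 * n ≤ d x) : cutoff d n x = 0 := by
  have hn' : (0:ℝ) < n := by exact_mod_cast hn
  have : (2 * (n:ℝ) - (d x : ℝ)) / n ≤ 0 := by
    apply div_nonpos_of_nonpos_of_nonneg _ hn'.le
    have : (2 * n : ℝ) ≤ (d x : ℝ) := by exact_mod_cast h
    linarith
  unfold cutoff
  rw [max_eq_right this, min_eq_left zero_le_one]

lemma cutoff_diff (d : V → ℕ) {n : ℕ} (hn : 1 ≤ n) (x y : V) :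
    |cutoff d n x - cutoff d n y| ≤ |(d x : ℝ) - (d y : ℝ)| / n := by
  have hn' : (0:ℝ) < n := by exact_mod_cast hn
  unfold cutoff
  calc |min (max ((2 * (n : ℝ) - (d x : ℝ)) / (n : ℝ)) 0) 1
        - min (max ((2 * (n : ℝ) - (d y : ℝ)) / (n : ℝ)) 0) 1|
      ≤ max |max ((2 * (n : ℝ) - (d x : ℝ)) / (n : ℝ)) 0
        - max ((2 * (n : ℝ) - (d y : ℝ)) / (n : ℝ)) 0| |(1:ℝ) - 1| :=
        abs_min_sub_min_le_max _ _ _ _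
    _ ≤ |max ((2 * (n : ℝ) - (d x : ℝ)) / (n : ℝ)) 0
        - max ((2 * (n : ℝ) - (d y : ℝ)) / (n : ℝ)) 0| := by
        apply max_le le_rfl; simp [abs_nonneg]
    _ ≤ |(2 * (n : ℝ) - (d x : ℝ)) / (n : ℝ) - (2 * (n : ℝ) - (d y : ℝ)) / (n : ℝ)| :=
        abs_max_sub_max_le_abs _ _ _
    _ = |(d x : ℝ) - (d y : ℝ)| / n := by
        rw [div_sub_div_same, abs_div, abs_of_pos hn', abs_sub_comm]
        congr 2
        ring

end cutoffFacts

section auxSums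
variable {V : Type*} [Countable V]

/-- The auxiliary term `T x = μ(x)⁻¹ ∑_y b x y (χ x - χ y) e^{iθ} u y`. -/
noncomputable def magT (μ : V → ℝ) (b : V → V → ℝ) (θ : V → V → ℝ)
    (χ : V → ℝ) (u : V → ℂ) (x : V) : ℂ :=
  (μ x : ℂ)⁻¹ *
    ∑' y, (b x y : ℂ) * ((χ x : ℂ) - (χ y : ℂ)) * Complex.exp (Complex.I * (θ x y : ℝ)) * u y

lemma tsum_b_eq_sum {b : V → V → ℝ} (hbnn : ∀ x y, 0 ≤ b x y)
    (hloc : ∀ x, {y | 0 < b x y}.Finite) (x : V) (g : V → ℂ) :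
    ∑' y, (b x y : ℂ) * g y = ∑ y ∈ (hloc x).toFinset, (b x y : ℂ) * g y := by
  apply tsum_eq_sum
  intro y hy
  have : ¬ 0 < b x y := by simpa using hy
  have hb : b x y = 0 := le_antisymm (not_lt.mp this) (hbnn x y)
  simp [hb]

lemma norm_exp_I_theta (t : ℝ) : ‖Complex.exp (Complex.I * (t : ℂ))‖ = 1 := by
  rw [Complex.norm_exp]
  simp [Complex.mul_re]

/-- Key algebraic identity: `Δ(χ u) = χ Δu + T`. -/
lemma magLap_cutoff_identity (μ : V → ℝ) {b : V → V → ℝ}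
    (θ : V → V → ℝ) (χ : V → ℝ) (u : V → ℂ)
    (hbnn : ∀ x y, 0 ≤ b x y) (hloc : ∀ x, {y | 0 < b x y}.Finite) (x : V) :
    magLap μ b θ (fun z => (χ z : ℂ) * u z) x
      = (χ x : ℂ) * magLap μ b θ u x + magT μ b θ χ u x := by
  unfold magLap magT
  rw [mul_comm ((χ x : ℂ)) _, mul_assoc, ← mul_add]
  congr 1
  rw [tsum_b_eq_sum hbnn hloc x (fun y => ((χ x : ℂ) * u x - Complex.exp (Complex.I * (θ x y : ℝ)) * ((χ y : ℂ) * u y)))]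
  have h1 : ∑' y, (b x y : ℂ) * (u x - Complex.exp (Complex.I * (θ x y : ℝ)) * u y)
      = ∑ y ∈ (hloc x).toFinset, (b x y : ℂ) * (u x - Complex.exp (Complex.I * (θ x y : ℝ)) * u y) :=
    tsum_b_eq_sum hbnn hloc x _
  have h2 : ∑' y, (b x y : ℂ) * ((χ x : ℂ) - (χ y : ℂ)) * Complex.exp (Complex.I * (θ x y : ℝ)) * u y
      = ∑ y ∈ (hloc x).toFinset, (b x y : ℂ) * ((χ x : ℂ) - (χ y : ℂ)) * Complex.exp (Complex.I * (θ x y : ℝ)) * u y := by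
    have := tsum_b_eq_sum hbnn hloc x
      (fun y => ((χ x : ℂ) - (χ y : ℂ)) * Complex.exp (Complex.I * (θ x y : ℝ)) * u y)
    simpa [mul_assoc] using this
  rw [h1, h2, Finset.sum_mul, ← Finset.sum_add_distrib]
  apply Finset.sum_congr rfl
  intro y _
  ring

variable {μ : V → ℝ} {μ₀ : ℝ} {b : V → V → ℝ} {θ : V → V → ℝ} {χ : V → ℝ} {u : V → ℂ} {C : ℝ}

/-- Pointwise bound on the weighted square norm of `T x` via Cauchy–Schwarz. -/
lemma magT_pointwise (hμ0 : 0 < μ₀) (hμ : ∀ x, μ₀ ≤ μ x)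
    (hbnn : ∀ x y, 0 ≤ b x y) (hloc : ∀ x, {y | 0 < b x y}.Finite)
    (hrow : ∀ x, ∑ y ∈ (hloc x).toFinset, b x y * |χ x - χ y| ≤ C) (x : V) :
    μ x * ‖magT μ b θ χ u x‖ ^ 2
      ≤ (μ₀⁻¹ * C) * ∑ y ∈ (hloc x).toFinset, b x y * |χ x - χ y| * ‖u y‖ ^ 2 := by
  set N := (hloc x).toFinset
  set w : V → ℝ := fun y => b x y * |χ x - χ y| with hw
  have hμx : 0 < μ x := lt_of_lt_of_le hμ0 (hμ x)
  have hwn : ∀ y, 0 ≤ w y := fun y => mul_nonneg (hbnn x y) (abs_nonneg _)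
  have hts : ∑' y, (b x y : ℂ) * ((χ x : ℂ) - (χ y : ℂ)) * Complex.exp (Complex.I * (θ x y : ℝ)) * u y
      = ∑ y ∈ N, (b x y : ℂ) * ((χ x : ℂ) - (χ y : ℂ)) * Complex.exp (Complex.I * (θ x y : ℝ)) * u y := by
    have := tsum_b_eq_sum hbnn hloc x
      (fun y => ((χ x : ℂ) - (χ y : ℂ)) * Complex.exp (Complex.I * (θ x y : ℝ)) * u y)
    simpa [mul_assoc] using this
  have hnorm1 : ‖magT μ b θ χ u x‖
      = (μ x)⁻¹ * ‖∑ y ∈ N, (b x y : ℂ) * ((χ x : ℂ) - (χ y : ℂ)) * Complex.exp (Complex.I * (θ x y : ℝ)) * u y‖ := by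
    unfold magT
    rw [hts, norm_mul, norm_inv, Complex.norm_real, Real.norm_eq_abs, abs_of_pos hμx]
  have hterm : ∀ y, ‖(b x y : ℂ) * ((χ x : ℂ) - (χ y : ℂ)) * Complex.exp (Complex.I * (θ x y : ℝ)) * u y‖
      = w y * ‖u y‖ := by
    intro y
    have : ((χ x : ℂ) - (χ y : ℂ)) = ((χ x - χ y : ℝ) : ℂ) := by push_cast; ring
    rw [norm_mul, norm_mul, norm_mul, this, Complex.norm_real, Complex.norm_real,
      norm_exp_I_theta, Real.norm_eq_abs, Real.norm_eq_abs, abs_of_nonneg (hbnn x y)]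
    ring
  have htri : ‖∑ y ∈ N, (b x y : ℂ) * ((χ x : ℂ) - (χ y : ℂ)) * Complex.exp (Complex.I * (θ x y : ℝ)) * u y‖
      ≤ ∑ y ∈ N, w y * ‖u y‖ := by
    refine (norm_sum_le _ _).trans_eq ?_
    exact Finset.sum_congr rfl fun y _ => hterm y
  have hcs : (∑ y ∈ N, w y * ‖u y‖) ^ 2 ≤ (∑ y ∈ N, w y) * ∑ y ∈ N, w y * ‖u y‖ ^ 2 := by
    have h := Finset.sum_mul_sq_le_sq_mul_sq N (fun y => Real.sqrt (w y))
      (fun y => Real.sqrt (w y) * ‖u y‖)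
    have e1 : ∀ y, Real.sqrt (w y) * (Real.sqrt (w y) * ‖u y‖) = w y * ‖u y‖ := by
      intro y; rw [← mul_assoc, Real.mul_self_sqrt (hwn y)]
    have e2 : ∀ y, Real.sqrt (w y) ^ 2 = w y := fun y => Real.sq_sqrt (hwn y)
    have e3 : ∀ y, (Real.sqrt (w y) * ‖u y‖) ^ 2 = w y * ‖u y‖ ^ 2 := by
      intro y; rw [mul_pow, e2]
    calc (∑ y ∈ N, w y * ‖u y‖) ^ 2
        = (∑ y ∈ N, Real.sqrt (w y) * (Real.sqrt (w y) * ‖u y‖)) ^ 2 := by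
          congr 1; exact Finset.sum_congr rfl fun y _ => (e1 y).symm
      _ ≤ (∑ y ∈ N, Real.sqrt (w y) ^ 2) * ∑ y ∈ N, (Real.sqrt (w y) * ‖u y‖) ^ 2 := h
      _ = (∑ y ∈ N, w y) * ∑ y ∈ N, w y * ‖u y‖ ^ 2 := by
          congr 1
          · exact Finset.sum_congr rfl fun y _ => e2 y
          · exact Finset.sum_congr rfl fun y _ => e3 y
  have hS2 : 0 ≤ ∑ y ∈ N, w y * ‖u y‖ ^ 2 :=
    Finset.sum_nonneg fun y _ => mul_nonneg (hwn y) (sq_nonneg _)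
  have hnn : (0:ℝ) ≤ ‖∑ y ∈ N, (b x y : ℂ) * ((χ x : ℂ) - (χ y : ℂ)) * Complex.exp (Complex.I * (θ x y : ℝ)) * u y‖ := norm_nonneg _
  have hbig : ‖∑ y ∈ N, (b x y : ℂ) * ((χ x : ℂ) - (χ y : ℂ)) * Complex.exp (Complex.I * (θ x y : ℝ)) * u y‖ ^ 2
      ≤ C * ∑ y ∈ N, w y * ‖u y‖ ^ 2 := by
    calc ‖∑ y ∈ N, (b x y : ℂ) * ((χ x : ℂ) - (χ y : ℂ)) * Complex.exp (Complex.I * (θ x y : ℝ)) * u y‖ ^ 2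
        ≤ (∑ y ∈ N, w y * ‖u y‖) ^ 2 := by
          apply pow_le_pow_left₀ hnn htri
      _ ≤ (∑ y ∈ N, w y) * ∑ y ∈ N, w y * ‖u y‖ ^ 2 := hcs
      _ ≤ C * ∑ y ∈ N, w y * ‖u y‖ ^ 2 := by
          apply mul_le_mul_of_nonneg_right (hrow x) hS2
  rw [hnorm1]
  have : μ x * ((μ x)⁻¹ * ‖∑ y ∈ N, (b x y : ℂ) * ((χ x : ℂ) - (χ y : ℂ)) * Complex.exp (Complex.I * (θ x y : ℝ)) * u y‖) ^ 2
      = (μ x)⁻¹ * ‖∑ y ∈ N, (b x y : ℂ) * ((χ x : ℂ) - (χ y : ℂ)) * Complex.exp (Complex.I * (θ x y : ℝ)) * u y‖ ^ 2 := by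
    field_simp
  rw [this]
  calc (μ x)⁻¹ * ‖∑ y ∈ N, (b x y : ℂ) * ((χ x : ℂ) - (χ y : ℂ)) * Complex.exp (Complex.I * (θ x y : ℝ)) * u y‖ ^ 2
      ≤ μ₀⁻¹ * (C * ∑ y ∈ N, w y * ‖u y‖ ^ 2) := by
        apply mul_le_mul (inv_anti₀ hμ0 (hμ x)) hbig (sq_nonneg _)
        positivity
    _ = (μ₀⁻¹ * C) * ∑ y ∈ N, w y * ‖u y‖ ^ 2 := by ring
    _ = (μ₀⁻¹ * C) * ∑ y ∈ N, b x y * |χ x - χ y| * ‖u y‖ ^ 2 := rfl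

/-- Fubini-type bound in `ℝ≥0∞` for the double sum `∑_x ∑_y b x y |χ x - χ y| ‖u y‖²`. -/
lemma double_sum_bound (hμ0 : 0 < μ₀) (hμ : ∀ x, μ₀ ≤ μ x)
    (hbsymm : ∀ x y, b x y = b y x)
    (hbnn : ∀ x y, 0 ≤ b x y) (hloc : ∀ x, {y | 0 < b x y}.Finite)
    (hC : 0 ≤ C)
    (hrow : ∀ x, ∑ y ∈ (hloc x).toFinset, b x y * |χ x - χ y| ≤ C)
    (hu : Summable fun x => μ x * ‖u x‖ ^ 2) :
    ∑' x, ENNReal.ofReal (∑ y ∈ (hloc x).toFinset, b x y * |χ x - χ y| * ‖u y‖ ^ 2)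
      ≤ ENNReal.ofReal (C * μ₀⁻¹ * ∑' x, μ x * ‖u x‖ ^ 2) := by
  set g : V → V → ℝ≥0∞ := fun x y => ENNReal.ofReal (b x y * |χ x - χ y| * ‖u y‖ ^ 2) with hg
  have hS2 : ∀ x, ENNReal.ofReal (∑ y ∈ (hloc x).toFinset, b x y * |χ x - χ y| * ‖u y‖ ^ 2)
      = ∑' y, g x y := by
    intro x
    rw [ENNReal.ofReal_sum_of_nonneg
      (fun y _ => mul_nonneg (mul_nonneg (hbnn x y) (abs_nonneg _)) (sq_nonneg _))]
    symm
    apply tsum_eq_sum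
    intro y hy
    have : ¬ 0 < b x y := by simpa using hy
    have hb : b x y = 0 := le_antisymm (not_lt.mp this) (hbnn x y)
    simp [hg, hb]
  calc ∑' x, ENNReal.ofReal (∑ y ∈ (hloc x).toFinset, b x y * |χ x - χ y| * ‖u y‖ ^ 2)
      = ∑' x, ∑' y, g x y := by exact tsum_congr hS2
    _ = ∑' y, ∑' x, g x y := ENNReal.tsum_comm
    _ ≤ ∑' y, ENNReal.ofReal (C * (‖u y‖ ^ 2)) := by
        apply ENNReal.tsum_le_tsum
        intro y
        have hcol : ∑' x, g x y = ∑ x ∈ (hloc y).toFinset, g x y := by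
          apply tsum_eq_sum
          intro x hx
          have : ¬ 0 < b y x := by simpa using hx
          have hb : b y x = 0 := le_antisymm (not_lt.mp this) (hbnn y x)
          have hb' : b x y = 0 := by rw [hbsymm]; exact hb
          simp [hg, hb']
        rw [hcol]
        have hsum : ∑ x ∈ (hloc y).toFinset, g x y
            = ENNReal.ofReal (∑ x ∈ (hloc y).toFinset, b x y * |χ x - χ y| * ‖u y‖ ^ 2) := by
          rw [ENNReal.ofReal_sum_of_nonneg
            (fun x _ => mul_nonneg (mul_nonneg (hbnn x y) (abs_nonneg _)) (sq_nonneg _))]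
        rw [hsum]
        apply ENNReal.ofReal_le_ofReal
        have hrw : ∑ x ∈ (hloc y).toFinset, b x y * |χ x - χ y| * ‖u y‖ ^ 2
            = (∑ x ∈ (hloc y).toFinset, b y x * |χ y - χ x|) * ‖u y‖ ^ 2 := by
          rw [Finset.sum_mul]
          apply Finset.sum_congr rfl
          intro x _
          rw [hbsymm x y, abs_sub_comm]
        rw [hrw]
        exact mul_le_mul_of_nonneg_right (hrow y) (sq_nonneg _)
    _ ≤ ∑' y, ENNReal.ofReal (C * μ₀⁻¹ * (μ y * ‖u y‖ ^ 2)) := by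
        apply ENNReal.tsum_le_tsum
        intro y
        apply ENNReal.ofReal_le_ofReal
        have h1 : ‖u y‖ ^ 2 ≤ μ₀⁻¹ * (μ y * ‖u y‖ ^ 2) := by
          have hμy : 0 < μ y := lt_of_lt_of_le hμ0 (hμ y)
          rw [← mul_assoc]
          have : (1:ℝ) ≤ μ₀⁻¹ * μ y := by
            rw [← div_eq_inv_mul, le_div_iff₀ hμ0]
            simpa using hμ y
          nlinarith [sq_nonneg ‖u y‖]
        calc C * ‖u y‖ ^ 2 ≤ C * (μ₀⁻¹ * (μ y * ‖u y‖ ^ 2)) := by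
              apply mul_le_mul_of_nonneg_left h1 hC
          _ = C * μ₀⁻¹ * (μ y * ‖u y‖ ^ 2) := by ring
    _ = ENNReal.ofReal (C * μ₀⁻¹) * ∑' y, ENNReal.ofReal (μ y * ‖u y‖ ^ 2) := by
        rw [← ENNReal.tsum_mul_left]
        apply tsum_congr
        intro y
        rw [ENNReal.ofReal_mul (mul_nonneg hC (inv_nonneg.mpr hμ0.le))]
    _ = ENNReal.ofReal (C * μ₀⁻¹) * ENNReal.ofReal (∑' y, μ y * ‖u y‖ ^ 2) := by
        rw [ENNReal.ofReal_tsum_of_nonneg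
          (fun y => mul_nonneg (hμ0.trans_le (hμ y)).le (sq_nonneg _)) hu]
    _ = ENNReal.ofReal (C * μ₀⁻¹ * ∑' x, μ x * ‖u x‖ ^ 2) := by
        rw [← ENNReal.ofReal_mul (mul_nonneg hC (inv_nonneg.mpr hμ0.le))]

lemma enn_summable_of_le {f : V → ℝ} (hf : ∀ x, 0 ≤ f x) {R : ℝ} (hR : 0 ≤ R)
    (h : ∑' x, ENNReal.ofReal (f x) ≤ ENNReal.ofReal R) :
    Summable f ∧ ∑' x, f x ≤ R := by
  have hne : ∑' x, ENNReal.ofReal (f x) ≠ ⊤ :=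
    ne_top_of_le_ne_top ENNReal.ofReal_ne_top h
  have hsum : Summable f := by
    have := ENNReal.summable_toReal hne
    refine this.congr fun x => ?_
    rw [ENNReal.toReal_ofReal (hf x)]
  refine ⟨hsum, ?_⟩
  rw [← ENNReal.ofReal_le_ofReal_iff hR, ENNReal.ofReal_tsum_of_nonneg hf hsum]
  exact h

lemma magT_summable_bound (hμ0 : 0 < μ₀) (hμ : ∀ x, μ₀ ≤ μ x)
    (hbsymm : ∀ x y, b x y = b y x)
    (hbnn : ∀ x y, 0 ≤ b x y) (hloc : ∀ x, {y | 0 < b x y}.Finite)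
    (hC : 0 ≤ C)
    (hrow : ∀ x, ∑ y ∈ (hloc x).toFinset, b x y * |χ x - χ y| ≤ C)
    (hu : Summable fun x => μ x * ‖u x‖ ^ 2) :
    Summable (fun x => μ x * ‖magT μ b θ χ u x‖ ^ 2) ∧
      ∑' x, μ x * ‖magT μ b θ χ u x‖ ^ 2 ≤ (μ₀⁻¹ * C) ^ 2 * ∑' x, μ x * ‖u x‖ ^ 2 := by
  have hf : ∀ x, 0 ≤ μ x * ‖magT μ b θ χ u x‖ ^ 2 :=
    fun x => mul_nonneg (hμ0.trans_le (hμ x)).le (sq_nonneg _)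
  have htsumu : 0 ≤ ∑' x, μ x * ‖u x‖ ^ 2 :=
    tsum_nonneg fun x => mul_nonneg (hμ0.trans_le (hμ x)).le (sq_nonneg _)
  have hR : 0 ≤ (μ₀⁻¹ * C) ^ 2 * ∑' x, μ x * ‖u x‖ ^ 2 := mul_nonneg (sq_nonneg _) htsumu
  apply enn_summable_of_le hf hR
  have hc : 0 ≤ μ₀⁻¹ * C := mul_nonneg (inv_nonneg.mpr hμ0.le) hC
  calc ∑' x, ENNReal.ofReal (μ x * ‖magT μ b θ χ u x‖ ^ 2)
      ≤ ∑' x, (ENNReal.ofReal (μ₀⁻¹ * C) *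
          ENNReal.ofReal (∑ y ∈ (hloc x).toFinset, b x y * |χ x - χ y| * ‖u y‖ ^ 2)) := by
        apply ENNReal.tsum_le_tsum
        intro x
        rw [← ENNReal.ofReal_mul hc]
        exact ENNReal.ofReal_le_ofReal
          (magT_pointwise hμ0 hμ hbnn hloc hrow x)
    _ = ENNReal.ofReal (μ₀⁻¹ * C) *
          ∑' x, ENNReal.ofReal (∑ y ∈ (hloc x).toFinset, b x y * |χ x - χ y| * ‖u y‖ ^ 2) :=
        ENNReal.tsum_mul_left
    _ ≤ ENNReal.ofReal (μ₀⁻¹ * C) * ENNReal.ofReal (C * μ₀⁻¹ * ∑' x, μ x * ‖u x‖ ^ 2) :=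
        mul_le_mul_right (double_sum_bound hμ0 hμ hbsymm hbnn hloc hC hrow hu) _
    _ = ENNReal.ofReal ((μ₀⁻¹ * C) ^ 2 * ∑' x, μ x * ‖u x‖ ^ 2) := by
        rw [← ENNReal.ofReal_mul hc]
        congr 1
        ring

end auxSums

/-- Young-type inequality: if `r ≤ s + t` then `r² ≤ (1-ε)⁻¹ s² + ε⁻¹ t²`. -/
lemma young_sq_ineq {ε s t r : ℝ} (hε0 : 0 < ε) (hε1 : ε < 1)
    (hr : 0 ≤ r) (hs : 0 ≤ s) (ht : 0 ≤ t) (h : r ≤ s + t) :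
    r ^ 2 ≤ (1 - ε)⁻¹ * s ^ 2 + ε⁻¹ * t ^ 2 := by
  have h1 : 0 < 1 - ε := by linarith
  have key : ε * (1 - ε) * r ^ 2 ≤ ε * s ^ 2 + (1 - ε) * t ^ 2 := by
    nlinarith [sq_nonneg (ε * s - (1 - ε) * t), mul_pos hε0 h1,
      mul_le_mul h h hr (by linarith : (0:ℝ) ≤ s + t)]
  have h2 : (1 - ε)⁻¹ * s ^ 2 + ε⁻¹ * t ^ 2 - r ^ 2
      = (ε * s ^ 2 + (1 - ε) * t ^ 2 - ε * (1 - ε) * r ^ 2) / (ε * (1 - ε)) := by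
    field_simp
  have h3 : 0 ≤ (ε * s ^ 2 + (1 - ε) * t ^ 2 - ε * (1 - ε) * r ^ 2) / (ε * (1 - ε)) :=
    div_nonneg (by linarith) (by positivity)
  linarith [h2 ▸ h3]

section
variable {V : Type*} [Countable V] (μ : V → ℝ) (μ₀ : ℝ) (b : V → V → ℝ) (θ : V → V → ℝ)
  (G : SimpleGraph V) (x₀ : V) (D P : ℕ → ℝ)

set_option maxHeartbeats 1000000 in
/-- Localization estimate (Proposition 2): for `0 < ε < 1`,
`‖χ_n Δ_θ u‖² ≤ (1−ε)⁻¹ ‖Δ_θ(χ_n u)‖² + ((9+4ε)/((1−ε)ε)) β_n² ‖u‖²`. -/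
theorem localization_estimate
    (hμ0 : 0 < μ₀) (hμ : ∀ x, μ₀ ≤ μ x)
    (hbsymm : ∀ x y, b x y = b y x) (hbnn : ∀ x y, 0 ≤ b x y) (hbdiag : ∀ x, b x x = 0)
    (hloc : ∀ x, {y | 0 < b x y}.Finite)
    (hG : ∀ x y, G.Adj x y ↔ 0 < b x y) (hconn : G.Connected)
    (hθ : ∀ x y, θ x y = -θ y x) (hθbd : ∀ x y, |θ x y| ≤ Real.pi)
    (hD : ∀ (m : ℕ) (x : V), G.dist x₀ x ≤ m → ({y | 0 < b x y}.ncard : ℝ) ≤ D m)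
    (hP : ∀ (m : ℕ) (x y : V), G.dist x₀ x ≤ m → b x y ≤ P m)
    (n : ℕ) (hn : 1 ≤ n) (ε : ℝ) (hε0 : 0 < ε) (hε1 : ε < 1)
    (u : V → ℂ) (hu : Summable fun x => μ x * ‖u x‖ ^ 2)
    (hΔu : Summable fun x => μ x * ‖magLap μ b θ u x‖ ^ 2) :
    wnormSq μ (fun x => (cutoff (fun z => G.dist x₀ z) n x : ℂ) * magLap μ b θ u x)
      ≤ (1 - ε)⁻¹ *
          wnormSq μ (magLap μ b θ (fun x => (cutoff (fun z => G.dist x₀ z) n x : ℂ) * u x))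
        + ((9 + 4 * ε) / ((1 - ε) * ε)) * (D (2 * n) * P (2 * n) / (μ₀ * n)) ^ 2
            * wnormSq μ u := by
  classical
  set d : V → ℕ := fun z => G.dist x₀ z with hd
  set χ : V → ℝ := cutoff d n with hχ
  have hn' : (0:ℝ) < n := by exact_mod_cast hn
  have hd0 : G.dist x₀ x₀ ≤ 2 * n := by rw [SimpleGraph.dist_self]; omega
  -- nonnegativity of the degree/weight bounds
  have hP2 : 0 ≤ P (2 * n) := by
    have h := hP (2 * n) x₀ x₀ hd0
    rwa [hbdiag] at h
  have hD2 : 0 ≤ D (2 * n) := by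
    have h := hD (2 * n) x₀ hd0
    exact le_trans (Nat.cast_nonneg _) h
  set C : ℝ := D (2 * n) * P (2 * n) / n with hCdef
  have hC : 0 ≤ C := by positivity
  -- row bound
  have hχdiff : ∀ x y, 0 < b x y → |χ x - χ y| ≤ 1 / n := by
    intro x y hb
    have hadj : G.Adj x y := (hG x y).mpr hb
    have h1 : G.dist x y ≤ 1 := by
      have := SimpleGraph.dist_le hadj.toWalk
      simpa using this
    have h2 : G.dist y x ≤ 1 := by rw [SimpleGraph.dist_comm]; exact h1
    have hxy : d y ≤ d x + 1 := by
      show G.dist x₀ y ≤ G.dist x₀ x + 1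
      have ht := hconn.dist_triangle (u := x₀) (v := x) (w := y)
      omega
    have hyx : d x ≤ d y + 1 := by
      show G.dist x₀ x ≤ G.dist x₀ y + 1
      have ht := hconn.dist_triangle (u := x₀) (v := y) (w := x)
      omega
    have habs : |(d x : ℝ) - (d y : ℝ)| ≤ 1 := by
      rw [abs_le]
      constructor
      · have : (d y : ℝ) ≤ (d x : ℝ) + 1 := by exact_mod_cast hxy
        linarith
      · have : (d x : ℝ) ≤ (d y : ℝ) + 1 := by exact_mod_cast hyx
        linarith
    calc |χ x - χ y| ≤ |(d x : ℝ) - (d y : ℝ)| / n := cutoff_diff d hn x y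
      _ ≤ 1 / n := (div_le_div_iff_of_pos_right hn').mpr habs
  have hsupp : ∀ x y, 0 < b x y → χ x ≠ χ y → G.dist x₀ x ≤ 2 * n := by
    intro x y hb hne
    have hadj : G.Adj x y := (hG x y).mpr hb
    by_contra hc
    push_neg at hc
    have hdx : 2 * n ≤ d x := by show 2 * n ≤ G.dist x₀ x; omega
    have hx0 : χ x = 0 := cutoff_eq_zero d hn hdx
    have hy2 : 2 * n ≤ d y := by
      show 2 * n ≤ G.dist x₀ y
      have h1 : G.dist x y ≤ 1 := by
        have := SimpleGraph.dist_le hadj.toWalk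
        simpa using this
      have h1' : G.dist y x ≤ 1 := by rw [SimpleGraph.dist_comm]; exact h1
      have ht := hconn.dist_triangle (u := x₀) (v := y) (w := x)
      have hdx' : 2 * n ≤ G.dist x₀ x := hdx
      omega
    have hy0 : χ y = 0 := cutoff_eq_zero d hn hy2
    exact hne (by rw [hx0, hy0])
  have hrow : ∀ x, ∑ y ∈ (hloc x).toFinset, b x y * |χ x - χ y| ≤ C := by
    intro x
    by_cases hx : G.dist x₀ x ≤ 2 * n
    · calc ∑ y ∈ (hloc x).toFinset, b x y * |χ x - χ y|
          ≤ ∑ _y ∈ (hloc x).toFinset, P (2 * n) * (1 / n) := by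
            apply Finset.sum_le_sum
            intro y hy
            have hb : 0 < b x y := by simpa using hy
            apply mul_le_mul (hP (2 * n) x y hx) (hχdiff x y hb) (abs_nonneg _) hP2
        _ = ((hloc x).toFinset.card : ℝ) * (P (2 * n) * (1 / n)) := by
            rw [Finset.sum_const, nsmul_eq_mul]
        _ ≤ D (2 * n) * (P (2 * n) * (1 / n)) := by
            apply mul_le_mul_of_nonneg_right _ (by positivity)
            have := hD (2 * n) x hx
            rwa [Set.ncard_eq_toFinset_card _ (hloc x)] at this
        _ = C := by rw [hCdef]; ring
    · have hzero : ∀ y ∈ (hloc x).toFinset, b x y * |χ x - χ y| = 0 := by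
        intro y hy
        have hb : 0 < b x y := by simpa using hy
        by_cases hne : χ x = χ y
        · rw [hne, sub_self, abs_zero, mul_zero]
        · exact absurd (hsupp x y hb hne) hx
      rw [Finset.sum_eq_zero hzero]
      exact hC
  -- bounds for the T term
  obtain ⟨hTsummable, hTbound⟩ :=
    magT_summable_bound (θ := θ) (u := u) hμ0 hμ hbsymm hbnn hloc hC hrow hu
  -- the key identity
  have hkey : ∀ x, magLap μ b θ (fun z => (χ z : ℂ) * u z) x
      = (χ x : ℂ) * magLap μ b θ u x + magT μ b θ χ u x :=
    magLap_cutoff_identity μ θ χ u hbnn hloc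
  have hμx : ∀ x, 0 < μ x := fun x => hμ0.trans_le (hμ x)
  -- summability of χ·Δu
  have hχΔ : Summable (fun x => μ x * ‖(χ x : ℂ) * magLap μ b θ u x‖ ^ 2) := by
    apply Summable.of_nonneg_of_le
      (fun x => mul_nonneg (hμx x).le (sq_nonneg _)) _ hΔu
    intro x
    have h1 : ‖(χ x : ℂ) * magLap μ b θ u x‖ ≤ ‖magLap μ b θ u x‖ := by
      rw [norm_mul, Complex.norm_real, Real.norm_eq_abs,
        abs_of_nonneg (cutoff_nonneg d n x)]
      calc χ x * ‖magLap μ b θ u x‖ ≤ 1 * ‖magLap μ b θ u x‖ :=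
            mul_le_mul_of_nonneg_right (cutoff_le_one d n x) (norm_nonneg _)
        _ = ‖magLap μ b θ u x‖ := one_mul _
    apply mul_le_mul_of_nonneg_left _ (hμx x).le
    exact pow_le_pow_left₀ (norm_nonneg _) h1 2
  -- summability of Δ(χ u)
  have hΔχu : Summable (fun x => μ x * ‖magLap μ b θ (fun z => (χ z : ℂ) * u z) x‖ ^ 2) := by
    have hbound : ∀ x, μ x * ‖magLap μ b θ (fun z => (χ z : ℂ) * u z) x‖ ^ 2
        ≤ 2 * (μ x * ‖(χ x : ℂ) * magLap μ b θ u x‖ ^ 2)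
          + 2 * (μ x * ‖magT μ b θ χ u x‖ ^ 2) := by
      intro x
      rw [hkey x]
      have h2 : ‖(χ x : ℂ) * magLap μ b θ u x + magT μ b θ χ u x‖ ^ 2
          ≤ 2 * ‖(χ x : ℂ) * magLap μ b θ u x‖ ^ 2 + 2 * ‖magT μ b θ χ u x‖ ^ 2 := by
        nlinarith [norm_add_le ((χ x : ℂ) * magLap μ b θ u x) (magT μ b θ χ u x),
          sq_nonneg (‖(χ x : ℂ) * magLap μ b θ u x‖ - ‖magT μ b θ χ u x‖),
          norm_nonneg ((χ x : ℂ) * magLap μ b θ u x + magT μ b θ χ u x),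
          norm_nonneg ((χ x : ℂ) * magLap μ b θ u x), norm_nonneg (magT μ b θ χ u x)]
      calc μ x * ‖(χ x : ℂ) * magLap μ b θ u x + magT μ b θ χ u x‖ ^ 2
          ≤ μ x * (2 * ‖(χ x : ℂ) * magLap μ b θ u x‖ ^ 2 + 2 * ‖magT μ b θ χ u x‖ ^ 2) :=
            mul_le_mul_of_nonneg_left h2 (hμx x).le
        _ = 2 * (μ x * ‖(χ x : ℂ) * magLap μ b θ u x‖ ^ 2)
            + 2 * (μ x * ‖magT μ b θ χ u x‖ ^ 2) := by ring
    exact Summable.of_nonneg_of_le (fun x => mul_nonneg (hμx x).le (sq_nonneg _)) hbound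
      ((hχΔ.mul_left 2).add (hTsummable.mul_left 2))
  -- pointwise Young inequality
  have hpt : ∀ x, μ x * ‖(χ x : ℂ) * magLap μ b θ u x‖ ^ 2
      ≤ (1 - ε)⁻¹ * (μ x * ‖magLap μ b θ (fun z => (χ z : ℂ) * u z) x‖ ^ 2)
        + ε⁻¹ * (μ x * ‖magT μ b θ χ u x‖ ^ 2) := by
    intro x
    have hid : (χ x : ℂ) * magLap μ b θ u x
        = magLap μ b θ (fun z => (χ z : ℂ) * u z) x - magT μ b θ χ u x := by
      rw [hkey x]; ring
    have htri : ‖(χ x : ℂ) * magLap μ b θ u x‖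
        ≤ ‖magLap μ b θ (fun z => (χ z : ℂ) * u z) x‖ + ‖magT μ b θ χ u x‖ := by
      rw [hid]; exact norm_sub_le _ _
    have hy := young_sq_ineq hε0 hε1 (norm_nonneg _) (norm_nonneg _) (norm_nonneg _) htri
    calc μ x * ‖(χ x : ℂ) * magLap μ b θ u x‖ ^ 2
        ≤ μ x * ((1 - ε)⁻¹ * ‖magLap μ b θ (fun z => (χ z : ℂ) * u z) x‖ ^ 2
          + ε⁻¹ * ‖magT μ b θ χ u x‖ ^ 2) := mul_le_mul_of_nonneg_left hy (hμx x).le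
      _ = (1 - ε)⁻¹ * (μ x * ‖magLap μ b θ (fun z => (χ z : ℂ) * u z) x‖ ^ 2)
          + ε⁻¹ * (μ x * ‖magT μ b θ χ u x‖ ^ 2) := by ring
  -- sum up
  have hsum : wnormSq μ (fun x => (χ x : ℂ) * magLap μ b θ u x)
      ≤ (1 - ε)⁻¹ * wnormSq μ (magLap μ b θ (fun z => (χ z : ℂ) * u z))
        + ε⁻¹ * ∑' x, μ x * ‖magT μ b θ χ u x‖ ^ 2 := by
    unfold wnormSq
    calc ∑' x, μ x * ‖(χ x : ℂ) * magLap μ b θ u x‖ ^ 2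
        ≤ ∑' x, ((1 - ε)⁻¹ * (μ x * ‖magLap μ b θ (fun z => (χ z : ℂ) * u z) x‖ ^ 2)
          + ε⁻¹ * (μ x * ‖magT μ b θ χ u x‖ ^ 2)) :=
          Summable.tsum_le_tsum hpt hχΔ ((hΔχu.mul_left _).add (hTsummable.mul_left _))
      _ = (1 - ε)⁻¹ * ∑' x, μ x * ‖magLap μ b θ (fun z => (χ z : ℂ) * u z) x‖ ^ 2
          + ε⁻¹ * ∑' x, μ x * ‖magT μ b θ χ u x‖ ^ 2 := by
          rw [Summable.tsum_add (hΔχu.mul_left _) (hTsummable.mul_left _),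
            tsum_mul_left, tsum_mul_left]
  have hβ : μ₀⁻¹ * C = D (2 * n) * P (2 * n) / (μ₀ * n) := by
    rw [hCdef]
    field_simp
  have hwu : 0 ≤ wnormSq μ u :=
    tsum_nonneg fun x => mul_nonneg (hμx x).le (sq_nonneg _)
  have hεle : ε⁻¹ ≤ (9 + 4 * ε) / ((1 - ε) * ε) := by
    rw [inv_eq_one_div, div_le_div_iff₀ hε0 (by nlinarith : (0:ℝ) < (1 - ε) * ε)]
    nlinarith
  have hfinal : ε⁻¹ * ∑' x, μ x * ‖magT μ b θ χ u x‖ ^ 2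
      ≤ ((9 + 4 * ε) / ((1 - ε) * ε)) * (D (2 * n) * P (2 * n) / (μ₀ * n)) ^ 2
        * wnormSq μ u := by
    have h1 : ∑' x, μ x * ‖magT μ b θ χ u x‖ ^ 2
        ≤ (D (2 * n) * P (2 * n) / (μ₀ * n)) ^ 2 * wnormSq μ u := by
      rw [← hβ]
      exact hTbound
    have hTnn : 0 ≤ ∑' x, μ x * ‖magT μ b θ χ u x‖ ^ 2 :=
      tsum_nonneg fun x => mul_nonneg (hμx x).le (sq_nonneg _)
    calc ε⁻¹ * ∑' x, μ x * ‖magT μ b θ χ u x‖ ^ 2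
        ≤ ε⁻¹ * ((D (2 * n) * P (2 * n) / (μ₀ * n)) ^ 2 * wnormSq μ u) :=
          mul_le_mul_of_nonneg_left h1 (inv_nonneg.mpr hε0.le)
      _ ≤ ((9 + 4 * ε) / ((1 - ε) * ε)) * ((D (2 * n) * P (2 * n) / (μ₀ * n)) ^ 2 * wnormSq μ u) :=
          mul_le_mul_of_nonneg_right hεle (mul_nonneg (sq_nonneg _) hwu)
      _ = ((9 + 4 * ε) / ((1 - ε) * ε)) * (D (2 * n) * P (2 * n) / (μ₀ * n)) ^ 2
          * wnormSq μ u := by ring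
  calc wnormSq μ (fun x => (χ x : ℂ) * magLap μ b θ u x)
      ≤ (1 - ε)⁻¹ * wnormSq μ (magLap μ b θ (fun z => (χ z : ℂ) * u z))
        + ε⁻¹ * ∑' x, μ x * ‖magT μ b θ χ u x‖ ^ 2 := hsum
    _ ≤ (1 - ε)⁻¹ * wnormSq μ (magLap μ b θ (fun z => (χ z : ℂ) * u z))
        + ((9 + 4 * ε) / ((1 - ε) * ε)) * (D (2 * n) * P (2 * n) / (μ₀ * n)) ^ 2
          * wnormSq μ u := add_le_add_right hfinal _

end
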